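/- Let ψ : [0,∞) → ℝ be bounded and measurable, and suppose that for every u ∈ [0,∞): c·ψ(u) = −δ·e^{au}·∫_u^∞ ψ(z)e^{−az} dz + γ·e^{−bu}·∫_0^u ψ(z)e^{bz} dz + (γ/b)·e^{−bu}. Then ψ is twice continuously differentiable on [0,∞) (one-sided derivatives at 0) and satisfies the linear ordinary differential equation c·ψ''(u) + (c(b−a) − δ − γ)·ψ'(u) + (aγ − bδ − abc)·ψ(u) = 0 for every u ∈ [0,∞). -/

import Mathlib

open MeasureTheory Set

private lemma expDeriv (k u : ℝ) :
    HasDerivAt (fun x : ℝ => Real.exp (k * x)) (k * Real.exp (k * u)) u := by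
  simpa [mul_comm] using ((hasDerivAt_id u).const_mul k).exp

private lemma expDerivNeg (k u : ℝ) :
    HasDerivAt (fun x : ℝ => Real.exp (-(k * x))) (-k * Real.exp (-(k * u))) u := by
  simpa [mul_comm] using (((hasDerivAt_id u).const_mul k).neg).exp

private lemma ode_algebra (a b γ δ c ea eb pf q r e d2 : ℝ) (hb : b ≠ 0) (hc : c ≠ 0)
    (h1 : c * r = -δ * ea * pf + γ * eb * q + γ / b * eb)
    (hE : e = (-δ * a * ea * pf + (δ + γ) * r + -b * γ * eb * q + -γ * eb) / c)
    (hE2 : d2 = (-δ * a * a * ea * pf + δ * a * r + (δ + γ) * e + b * b * γ * eb * q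
      + -b * γ * r + b * γ * eb) / c) :
    c * d2 + (c * (b - a) - δ - γ) * e + (a * γ - b * δ - a * b * c) * r = 0 := by
  have h3 : γ / b * b = γ := div_mul_cancel₀ γ hb
  have h1' : b * c * r = -(b * δ * ea * pf) + b * γ * eb * q + γ * eb := by
    linear_combination b * h1 + eb * h3
  have hce : e * c = -δ * a * ea * pf + (δ + γ) * r + -b * γ * eb * q + -γ * eb := by
    rw [hE]; exact div_mul_cancel₀ _ hc
  have hcd2 : d2 * c = -δ * a * a * ea * pf + δ * a * r + (δ + γ) * e + b * b * γ * eb * q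
      + -b * γ * r + b * γ * eb := by
    rw [hE2]; exact div_mul_cancel₀ _ hc
  linear_combination hcd2 + (b - a) * hce + (-a) * h1'

/-- If `ψ : [0,∞) → ℝ` is bounded and measurable and satisfies
`c ψ(u) = -δ e^{au} ∫_u^∞ ψ(z)e^{-az} dz + γ e^{-bu} ∫_0^u ψ(z)e^{bz} dz + (γ/b) e^{-bu}`
for all `u ≥ 0`, then `ψ` is of class `C²` on `[0,∞)` (one-sided derivatives at `0`)
and satisfies the ODE `c ψ'' + (c(b-a) - δ - γ) ψ' + (aγ - bδ - abc) ψ = 0` there. -/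
theorem ode_of_integral_equation
    (a b γ δ c : ℝ) (ha : 0 < a) (hb : 0 < b) (hγ : 0 < γ) (hδ : 0 < δ) (hc : 0 < c)
    (ψ : ℝ → ℝ) (hmeas : Measurable ψ)
    (hbdd : ∃ M : ℝ, ∀ u : ℝ, 0 ≤ u → |ψ u| ≤ M)
    (heq : ∀ u : ℝ, 0 ≤ u →
      c * ψ u = -δ * Real.exp (a * u) * (∫ z in Ioi u, ψ z * Real.exp (-(a * z)))
        + γ * Real.exp (-(b * u)) * (∫ z in (0:ℝ)..u, ψ z * Real.exp (b * z))
        + (γ / b) * Real.exp (-(b * u))) :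
    ∃ ψ' ψ'' : ℝ → ℝ,
      (∀ u : ℝ, 0 ≤ u → HasDerivWithinAt ψ (ψ' u) (Ici 0) u) ∧
      (∀ u : ℝ, 0 ≤ u → HasDerivWithinAt ψ' (ψ'' u) (Ici 0) u) ∧
      ContinuousOn ψ'' (Ici 0) ∧
      (∀ u : ℝ, 0 ≤ u →
        c * ψ'' u + (c * (b - a) - δ - γ) * ψ' u + (a * γ - b * δ - a * b * c) * ψ u = 0) := by
  obtain ⟨M, hM⟩ := hbdd
  set φ : ℝ → ℝ := (Ici (0:ℝ)).indicator ψ with hφdef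
  have hφmeas : Measurable φ := hmeas.indicator measurableSet_Ici
  have hφeq : ∀ u : ℝ, 0 ≤ u → φ u = ψ u := fun u hu => indicator_of_mem hu ψ
  have hφbdd : ∃ C, ∀ x, ‖φ x‖ ≤ C := by
    refine ⟨max M 0, fun x => ?_⟩
    by_cases h : x ∈ Ici (0:ℝ)
    · rw [hφdef, indicator_of_mem h]
      exact le_trans (hM x h) (le_max_left _ _)
    · rw [hφdef, indicator_of_notMem h]
      simp
  set f : ℝ → ℝ := fun z => φ z * Real.exp (-(a * z)) with hfdef
  set g : ℝ → ℝ := fun z => φ z * Real.exp (b * z) with hgdef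
  have hexpa : Continuous (fun z : ℝ => Real.exp (-(a * z))) := by fun_prop
  have hexpb : Continuous (fun z : ℝ => Real.exp (b * z)) := by fun_prop
  -- integrability facts
  have hfIoi : ∀ u : ℝ, IntegrableOn f (Ioi u) := by
    intro u
    have h1 : IntegrableOn (fun z : ℝ => Real.exp (-(a * z))) (Ioi u) := by
      simpa [neg_mul] using exp_neg_integrableOn_Ioi u ha
    exact h1.bdd_mul hφmeas.aestronglyMeasurable.restrict (ae_of_all _ hφbdd.choose_spec)
  have hfii : ∀ s t : ℝ, IntervalIntegrable f volume s t := by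
    intro s t
    exact ⟨((hexpa.intervalIntegrable s t).1).bdd_mul hφmeas.aestronglyMeasurable.restrict (ae_of_all _ hφbdd.choose_spec),
      ((hexpa.intervalIntegrable s t).2).bdd_mul hφmeas.aestronglyMeasurable.restrict (ae_of_all _ hφbdd.choose_spec)⟩
  have hgii : ∀ s t : ℝ, IntervalIntegrable g volume s t := by
    intro s t
    exact ⟨((hexpb.intervalIntegrable s t).1).bdd_mul hφmeas.aestronglyMeasurable.restrict (ae_of_all _ hφbdd.choose_spec),
      ((hexpb.intervalIntegrable s t).2).bdd_mul hφmeas.aestronglyMeasurable.restrict (ae_of_all _ hφbdd.choose_spec)⟩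
  set F : ℝ → ℝ := fun u => ∫ z in Ioi u, f z with hFdef
  set P : ℝ → ℝ := fun u => ∫ z in (0:ℝ)..u, f z with hPdef
  set Q : ℝ → ℝ := fun u => ∫ z in (0:ℝ)..u, g z with hQdef
  have hFP : ∀ u : ℝ, 0 ≤ u → F u = F 0 - P u := by
    intro u hu
    have h1 : P u = ∫ z in Ioc 0 u, f z := intervalIntegral.integral_of_le hu
    have h2 : F 0 = P u + F u := by
      rw [h1, hFdef]
      rw [← setIntegral_union (Ioc_disjoint_Ioi le_rfl) measurableSet_Ioi
        ((hfii 0 u).1) (hfIoi u), Ioc_union_Ioi_eq_Ioi hu]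
    linarith
  -- rewrite the integral equation in terms of F, P, Q
  have hIoi : ∀ u : ℝ, 0 ≤ u → (∫ z in Ioi u, ψ z * Real.exp (-(a * z))) = F u := by
    intro u hu
    refine setIntegral_congr_fun measurableSet_Ioi (fun z hz => ?_)
    rw [hfdef]
    simp only []
    rw [hφeq z (le_trans hu (le_of_lt hz))]
  have hQψ : ∀ u : ℝ, 0 ≤ u → (∫ z in (0:ℝ)..u, ψ z * Real.exp (b * z)) = Q u := by
    intro u hu
    refine intervalIntegral.integral_congr (fun z hz => ?_)
    rw [uIcc_of_le hu] at hz
    rw [hgdef]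
    simp only []
    rw [hφeq z hz.1]
  set R : ℝ → ℝ := fun u => (-δ * Real.exp (a * u) * (F 0 - P u)
      + γ * Real.exp (-(b * u)) * Q u + (γ / b) * Real.exp (-(b * u))) / c with hRdef
  have hψR : ∀ u : ℝ, 0 ≤ u → ψ u = R u := by
    intro u hu
    have h := heq u hu
    rw [hIoi u hu, hQψ u hu, hFP u hu] at h
    rw [hRdef]
    simp only []
    rw [← h]
    field_simp
  -- continuity of everything
  have hPcont : Continuous P := intervalIntegral.continuous_primitive hfii 0
  have hQcont : Continuous Q := intervalIntegral.continuous_primitive hgii 0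
  have hRcont : Continuous R := by
    rw [hRdef]
    apply Continuous.div_const
    fun_prop
  -- smooth versions
  set f₁ : ℝ → ℝ := fun z => R z * Real.exp (-(a * z)) with hf₁def
  set g₁ : ℝ → ℝ := fun z => R z * Real.exp (b * z) with hg₁def
  have hf₁cont : Continuous f₁ := hRcont.mul hexpa
  have hg₁cont : Continuous g₁ := hRcont.mul hexpb
  set P₁ : ℝ → ℝ := fun u => ∫ z in (0:ℝ)..u, f₁ z with hP₁def
  set Q₁ : ℝ → ℝ := fun u => ∫ z in (0:ℝ)..u, g₁ z with hQ₁def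
  have hP₁deriv : ∀ u : ℝ, HasDerivAt P₁ (f₁ u) u := fun u =>
    intervalIntegral.integral_hasDerivAt_right (hf₁cont.intervalIntegrable 0 u)
      hf₁cont.stronglyMeasurable.stronglyMeasurableAtFilter hf₁cont.continuousAt
  have hQ₁deriv : ∀ u : ℝ, HasDerivAt Q₁ (g₁ u) u := fun u =>
    intervalIntegral.integral_hasDerivAt_right (hg₁cont.intervalIntegrable 0 u)
      hg₁cont.stronglyMeasurable.stronglyMeasurableAtFilter hg₁cont.continuousAt
  have hP₁cont : Continuous P₁ := by
    rw [continuous_iff_continuousAt]; exact fun u => (hP₁deriv u).continuousAt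
  have hQ₁cont : Continuous Q₁ := by
    rw [continuous_iff_continuousAt]; exact fun u => (hQ₁deriv u).continuousAt
  have hP₁P : ∀ u : ℝ, 0 ≤ u → P₁ u = P u := by
    intro u hu
    refine intervalIntegral.integral_congr (fun z hz => ?_)
    rw [uIcc_of_le hu] at hz
    rw [hf₁def, hfdef]
    simp only []
    rw [← hψR z hz.1, ← hφeq z hz.1]
  have hQ₁Q : ∀ u : ℝ, 0 ≤ u → Q₁ u = Q u := by
    intro u hu
    refine intervalIntegral.integral_congr (fun z hz => ?_)
    rw [uIcc_of_le hu] at hz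
    rw [hg₁def, hgdef]
    simp only []
    rw [← hψR z hz.1, ← hφeq z hz.1]
  set R₁ : ℝ → ℝ := fun u => (-δ * Real.exp (a * u) * (F 0 - P₁ u)
      + γ * Real.exp (-(b * u)) * Q₁ u + (γ / b) * Real.exp (-(b * u))) / c with hR₁def
  have hR₁R : ∀ u : ℝ, 0 ≤ u → R₁ u = R u := by
    intro u hu
    rw [hR₁def, hRdef]
    simp only []
    rw [hP₁P u hu, hQ₁Q u hu]
  -- first derivative
  set D1 : ℝ → ℝ := fun u => (-δ * a * Real.exp (a * u) * (F 0 - P₁ u) + δ * R u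
      + -b * γ * Real.exp (-(b * u)) * Q₁ u + γ * R u + -γ * Real.exp (-(b * u))) / c
      with hD1def
  have hexpcancel_a : ∀ u : ℝ, Real.exp (a * u) * Real.exp (-(a * u)) = 1 := by
    intro u; rw [← Real.exp_add]; simp
  have hexpcancel_b : ∀ u : ℝ, Real.exp (-(b * u)) * Real.exp (b * u) = 1 := by
    intro u; rw [← Real.exp_add]; simp
  have e3 : γ / b * b = γ := div_mul_cancel₀ γ hb.ne'
  have hR₁deriv : ∀ u : ℝ, HasDerivAt R₁ (D1 u) u := by
    intro u
    have h1 : HasDerivAt (fun u : ℝ => -δ * Real.exp (a * u) * (F 0 - P₁ u))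
        ((-δ * (a * Real.exp (a * u))) * (F 0 - P₁ u)
          + (-δ * Real.exp (a * u)) * (-(f₁ u))) u :=
      (((expDeriv a u).const_mul (-δ)).mul ((hP₁deriv u).const_sub (F 0)))
    have h2 : HasDerivAt (fun u : ℝ => γ * Real.exp (-(b * u)) * Q₁ u)
        ((γ * (-b * Real.exp (-(b * u)))) * Q₁ u
          + (γ * Real.exp (-(b * u))) * g₁ u) u :=
      (((expDerivNeg b u).const_mul γ).mul (hQ₁deriv u))
    have h3 : HasDerivAt (fun u : ℝ => γ / b * Real.exp (-(b * u)))
        ((γ / b) * (-b * Real.exp (-(b * u)))) u := (expDerivNeg b u).const_mul (γ / b)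
    have h : HasDerivAt (fun u : ℝ => (-δ * Real.exp (a * u) * (F 0 - P₁ u)
        + γ * Real.exp (-(b * u)) * Q₁ u + γ / b * Real.exp (-(b * u))) / c)
        ((((-δ * (a * Real.exp (a * u))) * (F 0 - P₁ u)
          + (-δ * Real.exp (a * u)) * (-(f₁ u)))
          + ((γ * (-b * Real.exp (-(b * u)))) * Q₁ u
          + (γ * Real.exp (-(b * u))) * g₁ u)
          + (γ / b) * (-b * Real.exp (-(b * u)))) / c) u :=
      ((h1.add h2).add h3).div_const c
    have hval : (((-δ * (a * Real.exp (a * u))) * (F 0 - P₁ u)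
          + (-δ * Real.exp (a * u)) * (-(f₁ u)))
          + ((γ * (-b * Real.exp (-(b * u)))) * Q₁ u
          + (γ * Real.exp (-(b * u))) * g₁ u)
          + (γ / b) * (-b * Real.exp (-(b * u)))) / c = D1 u := by
      rw [hD1def]
      simp only [hf₁def, hg₁def]
      congr 1
      linear_combination (δ * R u) * hexpcancel_a u + (γ * R u) * hexpcancel_b u
        - Real.exp (-(b * u)) * e3
    rw [hR₁def, ← hval]
    exact h
  -- replace D1 by E on [0,∞)
  set E : ℝ → ℝ := fun u => (-δ * a * Real.exp (a * u) * (F 0 - P₁ u) + (δ + γ) * R₁ u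
      + -b * γ * Real.exp (-(b * u)) * Q₁ u + -γ * Real.exp (-(b * u))) / c with hEdef
  have hD1E : ∀ u : ℝ, 0 ≤ u → D1 u = E u := by
    intro u hu
    rw [hD1def, hEdef]
    simp only []
    rw [hR₁R u hu]
    ring
  -- second derivative
  set E2 : ℝ → ℝ := fun u => (-δ * a * a * Real.exp (a * u) * (F 0 - P₁ u) + δ * a * R u
      + (δ + γ) * D1 u + b * b * γ * Real.exp (-(b * u)) * Q₁ u + -b * γ * R u
      + b * γ * Real.exp (-(b * u))) / c with hE2def
  have hEderiv : ∀ u : ℝ, HasDerivAt E (E2 u) u := by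
    intro u
    have h1 : HasDerivAt (fun u : ℝ => -δ * a * Real.exp (a * u) * (F 0 - P₁ u))
        ((-δ * a * (a * Real.exp (a * u))) * (F 0 - P₁ u)
          + (-δ * a * Real.exp (a * u)) * (-(f₁ u))) u :=
      (((expDeriv a u).const_mul (-δ * a)).mul ((hP₁deriv u).const_sub (F 0)))
    have h2 : HasDerivAt (fun u : ℝ => (δ + γ) * R₁ u) ((δ + γ) * D1 u) u :=
      (hR₁deriv u).const_mul (δ + γ)
    have h3 : HasDerivAt (fun u : ℝ => -b * γ * Real.exp (-(b * u)) * Q₁ u)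
        ((-b * γ * (-b * Real.exp (-(b * u)))) * Q₁ u
          + (-b * γ * Real.exp (-(b * u))) * g₁ u) u :=
      (((expDerivNeg b u).const_mul (-b * γ)).mul (hQ₁deriv u))
    have h4 : HasDerivAt (fun u : ℝ => -γ * Real.exp (-(b * u)))
        (-γ * (-b * Real.exp (-(b * u)))) u := (expDerivNeg b u).const_mul (-γ)
    have h : HasDerivAt (fun u : ℝ => (-δ * a * Real.exp (a * u) * (F 0 - P₁ u)
        + (δ + γ) * R₁ u + -b * γ * Real.exp (-(b * u)) * Q₁ u
        + -γ * Real.exp (-(b * u))) / c)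
        (((((-δ * a * (a * Real.exp (a * u))) * (F 0 - P₁ u)
          + (-δ * a * Real.exp (a * u)) * (-(f₁ u)))
          + (δ + γ) * D1 u)
          + ((-b * γ * (-b * Real.exp (-(b * u)))) * Q₁ u
          + (-b * γ * Real.exp (-(b * u))) * g₁ u)
          + -γ * (-b * Real.exp (-(b * u)))) / c) u :=
      (((h1.add h2).add h3).add h4).div_const c
    have hval : ((((-δ * a * (a * Real.exp (a * u))) * (F 0 - P₁ u)
          + (-δ * a * Real.exp (a * u)) * (-(f₁ u)))
          + (δ + γ) * D1 u)
          + ((-b * γ * (-b * Real.exp (-(b * u)))) * Q₁ u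
          + (-b * γ * Real.exp (-(b * u))) * g₁ u)
          + -γ * (-b * Real.exp (-(b * u)))) / c = E2 u := by
      rw [hE2def]
      simp only [hf₁def, hg₁def]
      congr 1
      linear_combination (δ * a * R u) * hexpcancel_a u + (-b * γ * R u) * hexpcancel_b u
    rw [hEdef, ← hval]
    exact h
  -- continuity of E2
  have hD1cont : Continuous D1 := by
    rw [hD1def]
    apply Continuous.div_const
    fun_prop
  have hE2cont : Continuous E2 := by
    rw [hE2def]
    apply Continuous.div_const
    fun_prop
  refine ⟨E, E2, ?_, ?_, hE2cont.continuousOn, ?_⟩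
  · intro u hu
    have h : HasDerivWithinAt R₁ (D1 u) (Ici 0) u := (hR₁deriv u).hasDerivWithinAt
    have h2 : HasDerivWithinAt ψ (D1 u) (Ici 0) u :=
      h.congr (fun z hz => by rw [hψR z hz, ← hR₁R z hz]) (by rw [hψR u hu, ← hR₁R u hu])
    rwa [hD1E u hu] at h2
  · intro u hu
    exact (hEderiv u).hasDerivWithinAt
  · intro u hu
    have hRu : R u = ψ u := (hψR u hu).symm
    have hR₁u : R₁ u = ψ u := by rw [hR₁R u hu, hRu]
    have h1 : c * ψ u = -δ * Real.exp (a * u) * (F 0 - P₁ u)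
        + γ * Real.exp (-(b * u)) * Q₁ u + γ / b * Real.exp (-(b * u)) := by
      rw [hψR u hu, hRdef]
      simp only []
      rw [hP₁P u hu, hQ₁Q u hu]
      field_simp
    have hEu : E u = (-δ * a * Real.exp (a * u) * (F 0 - P₁ u) + (δ + γ) * ψ u
        + -b * γ * Real.exp (-(b * u)) * Q₁ u + -γ * Real.exp (-(b * u))) / c := by
      rw [hEdef]
      simp only []
      rw [hR₁u]
    have hE2u : E2 u = (-δ * a * a * Real.exp (a * u) * (F 0 - P₁ u) + δ * a * ψ u
        + (δ + γ) * E u + b * b * γ * Real.exp (-(b * u)) * Q₁ u + -b * γ * ψ u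
        + b * γ * Real.exp (-(b * u))) / c := by
      rw [hE2def]
      simp only []
      rw [hD1E u hu, hRu]
    exact ode_algebra a b γ δ c (Real.exp (a * u)) (Real.exp (-(b * u))) (F 0 - P₁ u)
      (Q₁ u) (ψ u) (E u) (E2 u) hb.ne' hc.ne' h1 hEu hE2u
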